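/- The auxiliary polynomial A(z) = z^k - q z^{k-1} - q p z^{k-2} - ... - q p^{k-1} has k distinct roots (it is separable over ℂ). -/

import Mathlib

open Finset Polynomial

private lemma aux_key (k : ℕ) (hk : 1 ≤ k) (p q : ℂ) (hpq : p + q = 1) :
    (X - C p) * (X ^ k - ∑ i ∈ Finset.Icc 1 k, C (q * p ^ (i - 1)) * X ^ (k - i)) =
      X ^ (k + 1) - X ^ k + C (q * p ^ k) := by
  have hC : (C p + C q : ℂ[X]) = 1 := by rw [← C_add, hpq, C_1]
  induction k, hk using Nat.le_induction with
  | base =>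
      simp only [Finset.Icc_self, Finset.sum_singleton, Nat.sub_self, pow_zero, pow_one,
        mul_one, C_mul, C_1]
      linear_combination (-(X : ℂ[X])) * hC
  | succ n hn ih =>
      have hA : (X ^ (n+1) - ∑ i ∈ Finset.Icc 1 (n+1), C (q * p ^ (i - 1)) * X ^ (n + 1 - i) : ℂ[X])
          = X * (X ^ n - ∑ i ∈ Finset.Icc 1 n, C (q * p ^ (i - 1)) * X ^ (n - i))
            - C (q * p ^ n) := by
        rw [Finset.sum_Icc_succ_top (by omega : 1 ≤ n + 1), mul_sub, Finset.mul_sum]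
        have hcongr : ∀ i ∈ Finset.Icc 1 n, C (q * p ^ (i - 1)) * X ^ (n + 1 - i)
            = X * (C (q * p ^ (i - 1)) * X ^ (n - i)) := by
          intro i hi
          simp only [Finset.mem_Icc] at hi
          have h1 : n + 1 - i = (n - i) + 1 := by omega
          rw [h1, pow_succ]; ring
        rw [Finset.sum_congr rfl hcongr]
        simp only [Nat.add_sub_cancel, Nat.sub_self, pow_zero, mul_one, pow_succ]
        ring
      rw [hA]
      simp only [C_mul, C_pow] at ih ⊢
      linear_combination (X : ℂ[X]) * ih

private lemma max_lem (k : ℕ) (hk : 1 ≤ k) (x : ℝ) (hx0 : 0 < x) (hx1 : x < 1)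
    (hne : x ≠ (k : ℝ) / ((k : ℝ) + 1)) :
    x ^ k - x ^ (k + 1) < ((k:ℝ) / ((k:ℝ) + 1)) ^ k - ((k:ℝ) / ((k:ℝ) + 1)) ^ (k + 1) := by
  have hk0 : (0:ℝ) < (k:ℝ) := by exact_mod_cast hk
  have hk1 : (0:ℝ) < (k:ℝ) + 1 := by positivity
  set r : ℝ := (k:ℝ) / ((k:ℝ) + 1) with hr
  have hr0 : 0 < r := by positivity
  have hr1 : r < 1 := by rw [hr, div_lt_one hk1]; linarith
  have hrk : ((k:ℝ) + 1) * r = k := by rw [hr]; field_simp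
  set f : ℝ → ℝ := fun t => t ^ k - t ^ (k+1) with hf
  have hderiv : ∀ t : ℝ, HasDerivAt f ((k:ℝ) * t ^ (k-1) - ((k:ℝ)+1) * t ^ k) t := by
    intro t
    have h12 := (hasDerivAt_pow k t).sub (hasDerivAt_pow (k+1) t)
    have he : (k:ℝ) * t ^ (k - 1) - ((k:ℝ) + 1) * t ^ k
        = (k:ℝ) * t ^ (k - 1) - ((k + 1 : ℕ):ℝ) * t ^ (k + 1 - 1) := by
      push_cast [Nat.add_sub_cancel]; ring
    rw [he]; exact h12
  have hcont : Continuous f := by fun_prop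
  have hmono : StrictMonoOn f (Set.Icc 0 r) := by
    apply strictMonoOn_of_deriv_pos (convex_Icc _ _) hcont.continuousOn
    intro t ht
    rw [interior_Icc] at ht
    rw [(hderiv t).deriv]
    have htk : 0 < t ^ (k-1) := pow_pos ht.1 _
    have h3 : ((k:ℝ)+1) * t < k := by
      calc ((k:ℝ)+1) * t < ((k:ℝ)+1) * r := by nlinarith [ht.2]
        _ = k := hrk
    have hexp : t ^ k = t ^ (k-1) * t := by
      rw [← pow_succ]; congr 1; omega
    rw [hexp]; nlinarith
  have hanti : StrictAntiOn f (Set.Icc r 1) := by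
    apply strictAntiOn_of_deriv_neg (convex_Icc _ _) hcont.continuousOn
    intro t ht
    rw [interior_Icc] at ht
    rw [(hderiv t).deriv]
    have htk : 0 < t ^ (k-1) := pow_pos (lt_trans hr0 ht.1) _
    have h3 : (k:ℝ) < ((k:ℝ)+1) * t := by
      calc (k:ℝ) = ((k:ℝ)+1) * r := hrk.symm
        _ < ((k:ℝ)+1) * t := by nlinarith [ht.1]
    have hexp : t ^ k = t ^ (k-1) * t := by
      rw [← pow_succ]; congr 1; omega
    rw [hexp]; nlinarith
  rcases lt_or_gt_of_ne hne with h | h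
  · exact hmono ⟨le_of_lt hx0, le_of_lt h⟩ ⟨le_of_lt hr0, le_refl r⟩ h
  · exact hanti ⟨le_refl r, le_of_lt hr1⟩ ⟨le_of_lt h, le_of_lt hx1⟩ h

theorem aux_poly_separable (k : ℕ) (hk : 1 ≤ k) (p q : ℝ) (hp0 : 0 < p) (hp1 : p < 1)
    (hq : q = 1 - p) :
    ((X ^ k - ∑ i ∈ Finset.Icc 1 k,
        C ((q : ℂ) * (p : ℂ) ^ (i - 1)) * X ^ (k - i) : Polynomial ℂ)).roots.toFinset.card
      = k := by
  have hq0 : 0 < q := by rw [hq]; linarith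
  set A : ℂ[X] := X ^ k - ∑ i ∈ Finset.Icc 1 k,
      C ((q : ℂ) * (p : ℂ) ^ (i - 1)) * X ^ (k - i) with hAdef
  set B : ℂ[X] := X ^ (k + 1) - X ^ k + C ((q:ℂ) * (p:ℂ) ^ k) with hBdef
  have hpq : (p:ℂ) + (q:ℂ) = 1 := by rw [hq]; push_cast; ring
  have key : (X - C (p:ℂ)) * A = B := aux_key k hk _ _ hpq
  -- B is monic of degree k+1
  have htail : (-(X ^ k) + C ((q:ℂ) * (p:ℂ) ^ k)).degree < ((k+1 : ℕ) : WithBot ℕ) := by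
    refine lt_of_le_of_lt (degree_add_le _ _) ?_
    rw [max_lt_iff, degree_neg, degree_X_pow]
    constructor
    · exact_mod_cast Nat.lt_succ_self k
    · exact lt_of_le_of_lt degree_C_le (by exact_mod_cast Nat.succ_pos k)
  have hBeq : B = X ^ (k+1) + (-(X ^ k) + C ((q:ℂ) * (p:ℂ) ^ k)) := by rw [hBdef]; ring
  have hBdeg : B.degree = ((k+1 : ℕ) : WithBot ℕ) := by
    rw [hBeq, degree_add_eq_left_of_degree_lt (by rwa [degree_X_pow]), degree_X_pow]
  have hBmonic : B.Monic := by
    rw [hBeq]; exact monic_X_pow_add htail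
  have hAmonic : A.Monic := (monic_X_sub_C (p:ℂ)).of_mul_monic_left (key ▸ hBmonic)
  have hAne : A ≠ 0 := hAmonic.ne_zero
  have hAdeg : A.natDegree = k := by
    have h1 : ((X - C (p:ℂ)) * A).natDegree = k + 1 := by
      rw [key]; exact natDegree_eq_of_degree_eq_some hBdeg
    rw [natDegree_mul (X_sub_C_ne_zero _) hAne, natDegree_X_sub_C] at h1
    omega
  -- A is separable: no common root with its derivative
  have hsep : A.Separable := by
    rw [Polynomial.separable_def,
      Polynomial.isCoprime_iff_aeval_ne_zero_of_isAlgClosed (k := ℂ) ℂ]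
    intro z
    by_contra hcon
    push_neg at hcon
    obtain ⟨hA0, hA'0⟩ := hcon
    rw [coe_aeval_eq_eval] at hA0 hA'0
    -- z is a common root of B and B'
    have hB0 : B.eval z = 0 := by
      rw [← key, eval_mul, hA0, mul_zero]
    have hB'0 : B.derivative.eval z = 0 := by
      rw [← key, derivative_mul, eval_add, eval_mul, eval_mul, hA0, hA'0, mul_zero, mul_zero,
        add_zero]
    have hBev : z ^ (k+1) - z ^ k + (q:ℂ) * (p:ℂ) ^ k = 0 := by
      have := hB0
      simp only [hBdef, eval_add, eval_sub, eval_pow, eval_X, eval_C] at this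
      linear_combination this
    have hB'ev : ((k:ℂ)+1) * z ^ k - (k:ℂ) * z ^ (k-1) = 0 := by
      have := hB'0
      simp only [hBdef, derivative_add, derivative_sub, derivative_X_pow, derivative_C,
        eval_add, eval_sub, eval_mul, eval_pow, eval_X, eval_C, eval_natCast, eval_zero] at this
      push_cast [Nat.add_sub_cancel] at this
      linear_combination this
    have hz0 : z ≠ 0 := by
      intro h0
      rw [h0] at hBev
      simp only [zero_pow (by omega : k + 1 ≠ 0), zero_pow (by omega : k ≠ 0)] at hBev
      have : (q:ℂ) * (p:ℂ) ^ k = 0 := by linear_combination hBev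
      have h1 : q * p ^ k = 0 := by exact_mod_cast this
      nlinarith [pow_pos hp0 k]
    have hzk : ((k:ℂ) + 1) * z = (k:ℂ) := by
      have hexp : z ^ k = z ^ (k-1) * z := by rw [← pow_succ]; congr 1; omega
      rw [hexp] at hB'ev
      have hzk1 : (z:ℂ) ^ (k-1) ≠ 0 := pow_ne_zero _ hz0
      have : z ^ (k-1) * (((k:ℂ)+1) * z - (k:ℂ)) = 0 := by linear_combination hB'ev
      rcases mul_eq_zero.mp this with h | h
      · exact absurd h hzk1
      · linear_combination h
    set r : ℝ := (k:ℝ) / ((k:ℝ) + 1) with hrdef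
    have hk1 : (0:ℝ) < (k:ℝ) + 1 := by positivity
    have h1 : ((k:ℂ) + 1) ≠ 0 := by
      have : ((k:ℂ) + 1) = ((k + 1 : ℕ) : ℂ) := by push_cast; ring
      rw [this]
      exact Nat.cast_ne_zero.mpr (by omega)
    have hzr : z = (r:ℝ) := by
      have h2 : ((k:ℂ) + 1) * (r:ℂ) = (k:ℂ) := by
        rw [hrdef]; push_cast; field_simp
      exact mul_left_cancel₀ h1 (hzk.trans h2.symm)
    -- real equation
    have hreal : r ^ (k+1) - r ^ k + q * p ^ k = 0 := by
      rw [hzr] at hBev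
      exact_mod_cast hBev
    have hqpk : q * p ^ k = r ^ k - r ^ (k+1) := by linarith
    by_cases hpr : p = r
    · -- use second derivative
      have hzp : z = (p:ℂ) := by rw [hzr, hpr]
      have hd1 : derivative ((X - C (p:ℂ)) * A) = A + (X - C (p:ℂ)) * derivative A := by
        rw [derivative_mul]; simp
      have hd2 : derivative (derivative ((X - C (p:ℂ)) * A))
          = 2 * derivative A + (X - C (p:ℂ)) * derivative (derivative A) := by
        rw [hd1, derivative_add, derivative_mul]
        simp only [derivative_sub, derivative_X, derivative_C, sub_zero, one_mul]
        ring
      have hA'p : eval ((p:ℝ):ℂ) (derivative A) = 0 := by rw [← hzp]; exact hA'0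
      have hB''0 : eval z (derivative (derivative B)) = 0 := by
        rw [← key, hd2]
        simp only [eval_add, eval_mul, eval_ofNat, eval_sub, eval_X, eval_C, hzp, hA'p,
          mul_zero, zero_mul, sub_self, add_zero, zero_add]
      have hB''ev : ((k:ℂ)+1) * ((k:ℂ) * z ^ (k-1))
          - (k:ℂ) * (((k-1:ℕ):ℂ) * z ^ (k-1-1)) = 0 := by
        have := hB''0
        simp only [hBdef, derivative_add, derivative_sub, derivative_X_pow, derivative_C,
          derivative_C_mul, derivative_zero, eval_add, eval_sub, eval_mul, eval_pow, eval_X, eval_C,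
          eval_natCast, eval_zero] at this
        push_cast [Nat.add_sub_cancel] at this ⊢
        linear_combination this
      rcases Nat.lt_or_ge k 2 with h2 | h2
      · interval_cases k
        norm_num at hB''ev
      · have e2 : k - 1 - 1 = k - 2 := by omega
        have e1 : ((k - 1 : ℕ) : ℂ) = (k:ℂ) - 1 := by
          have := Nat.cast_sub (R := ℂ) (by omega : 1 ≤ k)
          simpa using this
        rw [e1, e2] at hB''ev
        have hexp : z ^ (k-1) = z ^ (k-2) * z := by rw [← pow_succ]; congr 1; omega
        rw [hexp] at hB''ev
        have hkc : (k:ℂ) ≠ 0 := Nat.cast_ne_zero.mpr (by omega)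
        have hz2 : z ^ (k-2) ≠ 0 := pow_ne_zero _ hz0
        have hfin : z ^ (k-2) * (k:ℂ) * (((k:ℂ)+1) * z - ((k:ℂ)-1)) = 0 := by
          linear_combination hB''ev
        have h4 : ((k:ℂ)+1) * z - ((k:ℂ)-1) = 1 := by rw [hzk]; ring
        rw [h4, mul_one] at hfin
        exact (mul_ne_zero hz2 hkc) hfin
    · -- p ≠ r: contradiction with strict max
      have hlt := max_lem k hk p hp0 hp1 hpr
      have : p ^ k - p ^ (k+1) = q * p ^ k := by rw [hq]; ring
      rw [this, hqpk] at hlt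
      exact lt_irrefl _ hlt
  -- conclude
  have hnodup : A.roots.Nodup := Polynomial.nodup_roots hsep
  rw [Multiset.toFinset_card_of_nodup hnodup]
  have hsplits : A.Splits := IsAlgClosed.splits A
  rw [splits_iff_card_roots.mp hsplits, hAdeg]
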